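/- arXiv:2103.01061 — 3 statements merged into one kernel-verified Lean document; each statement's English description precedes it below -/
import Mathlib

section
/- For any finite-dimensional density matrix ρ, the von Neumann entropy S(ρ) = −tr(ρ log ρ) is at most the Shannon entropy of the diagonal of ρ in any orthonormal basis: S(ρ) ≤ −∑_j ρ_jj log ρ_jj. -/
open scoped ComplexOrder

/-- For a density matrix `ρ`, the von Neumann entropy `S(ρ) = −∑ λ_i log λ_i`
(computed from the eigenvalues of `ρ`) is at most the Shannon entropy of the diagonal of `ρ`
in any orthonormal basis (obtained by conjugating with a unitary `U`). -/
theorem vonNeumann_entropy_le_diagonal_shannon {N : ℕ}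
    (ρ : Matrix (Fin N) (Fin N) ℂ)
    (hρ : ρ.PosSemidef) (htr : ρ.trace = 1)
    (U : Matrix.unitaryGroup (Fin N) ℂ) :
    -∑ i, hρ.1.eigenvalues i * Real.log (hρ.1.eigenvalues i)
      ≤ -∑ j, ((star (U : Matrix (Fin N) (Fin N) ℂ) * ρ * (U : Matrix (Fin N) (Fin N) ℂ)) j j).re
          * Real.log (((star (U : Matrix (Fin N) (Fin N) ℂ) * ρ *
              (U : Matrix (Fin N) (Fin N) ℂ)) j j).re) := by
  classical
  set lam := hρ.1.eigenvalues with hlam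
  set W : Matrix (Fin N) (Fin N) ℂ := (hρ.1.eigenvectorUnitary : Matrix (Fin N) (Fin N) ℂ)
    with hW
  set M : Matrix (Fin N) (Fin N) ℂ := star W * (U : Matrix (Fin N) (Fin N) ℂ) with hM
  set p : Fin N → Fin N → ℝ := fun i j => ‖M i j‖ ^ 2 with hp
  have hWW : W * star W = 1 := Matrix.mem_unitaryGroup_iff.mp hρ.1.eigenvectorUnitary.2
  have hWW' : star W * W = 1 := Matrix.mem_unitaryGroup_iff'.mp hρ.1.eigenvectorUnitary.2
  have hUU : (U : Matrix (Fin N) (Fin N) ℂ) * star (U : Matrix (Fin N) (Fin N) ℂ) = 1 :=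
    Matrix.mem_unitaryGroup_iff.mp U.2
  have hUU' : star (U : Matrix (Fin N) (Fin N) ℂ) * (U : Matrix (Fin N) (Fin N) ℂ) = 1 :=
    Matrix.mem_unitaryGroup_iff'.mp U.2
  have hMM : star M * M = 1 := by
    rw [hM, star_mul, star_star, mul_assoc, ← mul_assoc W, hWW, one_mul, hUU']
  have hMM' : M * star M = 1 := by
    rw [hM, star_mul, star_star, mul_assoc, ← mul_assoc (U : Matrix (Fin N) (Fin N) ℂ), hUU,
      one_mul, hWW']
  -- diagonal entry formula
  have key : ∀ j, ((star (U : Matrix (Fin N) (Fin N) ℂ) * ρ * (U : Matrix (Fin N) (Fin N) ℂ)) j j)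
      = ∑ i, (lam i : ℂ) * (p i j : ℝ) := by
    intro j
    have hrw : star (U : Matrix (Fin N) (Fin N) ℂ) * ρ * (U : Matrix (Fin N) (Fin N) ℂ)
        = star M * Matrix.diagonal ((RCLike.ofReal ∘ lam : Fin N → ℂ)) * M := by
      rw [hM, star_mul, star_star]
      conv_lhs => rw [hρ.1.spectral_theorem]
      simp only [Unitary.conjStarAlgAut_apply, mul_assoc, hW, hlam]
    rw [hrw, Matrix.mul_apply]
    have hd : ∀ k, (star M * Matrix.diagonal ((RCLike.ofReal ∘ lam : Fin N → ℂ))) j k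
        = star (M k j) * (lam k : ℂ) := by
      intro k
      rw [Matrix.mul_diagonal]
      simp [Matrix.star_apply]
    simp only [hd]
    refine Finset.sum_congr rfl fun k _ => ?_
    have h1 : (star (M k j)) * (lam k : ℂ) * M k j
        = (lam k : ℂ) * ((star (M k j)) * M k j) := by ring
    rw [h1]
    congr 1
    rw [Complex.star_def, ← Complex.normSq_eq_conj_mul_self, Complex.normSq_eq_norm_sq, hp]
  have keyre : ∀ j,
      ((star (U : Matrix (Fin N) (Fin N) ℂ) * ρ * (U : Matrix (Fin N) (Fin N) ℂ)) j j).re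
      = ∑ i, p i j * lam i := by
    intro j
    rw [key j, Complex.re_sum]
    refine Finset.sum_congr rfl fun i _ => ?_
    simp [Complex.mul_re, mul_comm]
  have hpnn : ∀ i j, 0 ≤ p i j := fun i j => by positivity
  have hlamnn : ∀ i, 0 ≤ lam i := fun i => hρ.eigenvalues_nonneg i
  -- column sums of p are 1
  have hcol : ∀ j, ∑ i, p i j = 1 := by
    intro j
    have h1 : (star M * M) j j = (1 : Matrix (Fin N) (Fin N) ℂ) j j := by rw [hMM]
    rw [Matrix.mul_apply, Matrix.one_apply_eq] at h1
    have h2 : ∀ k, (star M) j k * M k j = ((p k j : ℝ) : ℂ) := by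
      intro k
      rw [Matrix.star_apply, Complex.star_def, ← Complex.normSq_eq_conj_mul_self,
        Complex.normSq_eq_norm_sq, hp]
    rw [Finset.sum_congr rfl fun k _ => h2 k] at h1
    exact_mod_cast h1
  have hrow : ∀ i, ∑ j, p i j = 1 := by
    intro i
    have h1 : (M * star M) i i = (1 : Matrix (Fin N) (Fin N) ℂ) i i := by rw [hMM']
    rw [Matrix.mul_apply, Matrix.one_apply_eq] at h1
    have h2 : ∀ k, M i k * (star M) k i = ((p i k : ℝ) : ℂ) := by
      intro k
      rw [Matrix.star_apply, Complex.star_def, mul_comm, ← Complex.normSq_eq_conj_mul_self,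
        Complex.normSq_eq_norm_sq, hp]
    rw [Finset.sum_congr rfl fun k _ => h2 k] at h1
    exact_mod_cast h1
  -- rewrite both sides with negMulLog
  have lhs_eq : -∑ i, lam i * Real.log (lam i) = ∑ i, Real.negMulLog (lam i) := by
    rw [← Finset.sum_neg_distrib]
    exact Finset.sum_congr rfl fun i _ => by rw [Real.negMulLog]; ring
  rw [lhs_eq]
  have rhs_eq : -∑ j, ((star (U : Matrix (Fin N) (Fin N) ℂ) * ρ * (U : Matrix (Fin N) (Fin N) ℂ)) j j).re
          * Real.log (((star (U : Matrix (Fin N) (Fin N) ℂ) * ρ *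
              (U : Matrix (Fin N) (Fin N) ℂ)) j j).re)
      = ∑ j, Real.negMulLog (∑ i, p i j * lam i) := by
    rw [← Finset.sum_neg_distrib]
    exact Finset.sum_congr rfl fun j _ => by rw [keyre j, Real.negMulLog]; ring
  rw [rhs_eq]
  -- Jensen
  calc ∑ i, Real.negMulLog (lam i)
      = ∑ i, (∑ j, p i j) * Real.negMulLog (lam i) := by
        refine Finset.sum_congr rfl fun i _ => by rw [hrow i, one_mul]
    _ = ∑ j, ∑ i, p i j * Real.negMulLog (lam i) := by
        rw [Finset.sum_comm]
        exact Finset.sum_congr rfl fun i _ => by rw [Finset.sum_mul]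
    _ ≤ ∑ j, Real.negMulLog (∑ i, p i j * lam i) := by
        refine Finset.sum_le_sum fun j _ => ?_
        have := Real.concaveOn_negMulLog.le_map_sum
          (t := Finset.univ) (w := fun i => p i j) (p := lam)
          (fun i _ => hpnn i j) (hcol j) (fun i _ => Set.mem_Ici.mpr (hlamnn i))
        simpa [smul_eq_mul] using this
end

section
/- For a Hermitian Hamiltonian H on ℂ^N and β > 0, log tr(e^{−βH}) = −β · min over density matrices ρ of (tr(Hρ) − β⁻¹ S(ρ)), with the minimum attained by the Gibbs state ρ_β = e^{−βH}/tr(e^{−βH}). -/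
open scoped ComplexOrder

open NormedSpace

/-- classical Gibbs inequality -/
lemma aux_gibbs {n : Type*} [Fintype n] (l m : n → ℝ) (hl : ∀ i, 0 ≤ l i)
    (hm : ∀ i, 0 < m i) (hsum : ∑ i, l i = ∑ i, m i) :
    ∑ i, l i * Real.log (m i) ≤ ∑ i, l i * Real.log (l i) := by
  have key : ∀ i, l i * Real.log (m i) ≤ l i * Real.log (l i) + (m i - l i) := by
    intro i
    rcases eq_or_lt_of_le (hl i) with h0 | h0
    · rw [← h0]; simp; linarith [hm i]
    · have h1 : Real.log (m i / l i) ≤ m i / l i - 1 :=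
        Real.log_le_sub_one_of_pos (div_pos (hm i) h0)
      have h2 : l i * Real.log (m i / l i) ≤ l i * (m i / l i - 1) :=
        mul_le_mul_of_nonneg_left h1 (hl i)
      rw [Real.log_div (hm i).ne' h0.ne'] at h2
      have h3 : l i * (m i / l i - 1) = m i - l i := by field_simp
      nlinarith [h2, h3]
  calc ∑ i, l i * Real.log (m i) ≤ ∑ i, (l i * Real.log (l i) + (m i - l i)) :=
        Finset.sum_le_sum fun i _ => key i
    _ = ∑ i, l i * Real.log (l i) := by
        rw [Finset.sum_add_distrib, Finset.sum_sub_distrib, hsum]; ring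

/-- Jensen for log -/
lemma aux_jensen_log {n : Type*} [Fintype n] (w q : n → ℝ) (hw : ∀ i, 0 ≤ w i)
    (hw1 : ∑ i, w i = 1) (hq : ∀ i, 0 < q i) :
    ∑ i, w i * Real.log (q i) ≤ Real.log (∑ i, w i * q i) := by
  have := strictConcaveOn_log_Ioi.concaveOn.le_map_sum (t := Finset.univ)
    (fun i _ => hw i) hw1 (p := q) (fun i _ => hq i)
  simpa [smul_eq_mul] using this

/-- combined Klein-type inequality -/
lemma aux_klein {n : Type*} [Fintype n] (P : n → n → ℝ) (l q : n → ℝ)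
    (hP : ∀ i j, 0 ≤ P i j) (hProw : ∀ i, ∑ j, P i j = 1) (hPcol : ∀ j, ∑ i, P i j = 1)
    (hl : ∀ i, 0 ≤ l i) (hl1 : ∑ i, l i = 1) (hq : ∀ i, 0 < q i) (hq1 : ∑ i, q i = 1) :
    ∑ j, l j * (∑ i, P i j * Real.log (q i)) ≤ ∑ j, l j * Real.log (l j) := by
  set μ : n → ℝ := fun j => ∑ i, P i j * q i with hμ
  have hμpos : ∀ j, 0 < μ j := by
    intro j
    have hex : ∃ i, 0 < P i j := by
      by_contra hno
      push_neg at hno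
      have : ∑ i, P i j ≤ 0 := Finset.sum_nonpos fun i _ => hno i
      rw [hPcol j] at this; linarith
    obtain ⟨i0, hi0⟩ := hex
    exact Finset.sum_pos' (fun i _ => mul_nonneg (hP i j) (hq i).le)
      ⟨i0, Finset.mem_univ i0, mul_pos hi0 (hq i0)⟩
  have hμ1 : ∑ j, μ j = 1 := by
    simp only [hμ]
    rw [Finset.sum_comm]
    calc ∑ i, ∑ j, P i j * q i = ∑ i, q i * ∑ j, P i j := by
          congr 1; ext i; rw [Finset.mul_sum]; congr 1; ext j; ring
      _ = 1 := by simp only [hProw, mul_one, hq1]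
  have step1 : ∑ j, l j * (∑ i, P i j * Real.log (q i)) ≤ ∑ j, l j * Real.log (μ j) := by
    apply Finset.sum_le_sum
    intro j _
    apply mul_le_mul_of_nonneg_left _ (hl j)
    exact aux_jensen_log (fun i => P i j) q (fun i => hP i j) (hPcol j) hq
  refine step1.trans ?_
  exact aux_gibbs l μ hl hμpos (by rw [hl1, hμ1])

open Polynomial in
/-- determinant characterization step -/
lemma aux_det {n : Type*} [Fintype n] [DecidableEq n] (A : Matrix n n ℂ)
    (V : Matrix.unitaryGroup n ℂ) (c : n → ℝ)
    (hc : A = (V : Matrix n n ℂ) * Matrix.diagonal (Complex.ofReal ∘ c) * star (V : Matrix n n ℂ))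
    (x : ℂ) : (x • (1 : Matrix n n ℂ) - A).det = ∏ i, (x - (c i : ℂ)) := by
  have hVV : (V : Matrix n n ℂ) * star (V : Matrix n n ℂ) = 1 :=
    Matrix.mem_unitaryGroup_iff.mp V.2
  have h1 : x • (1 : Matrix n n ℂ) - A
      = (V : Matrix n n ℂ) * Matrix.diagonal (fun i => x - (c i : ℂ)) * star (V : Matrix n n ℂ) := by
    have : Matrix.diagonal (fun i => x - (c i : ℂ))
        = x • (1 : Matrix n n ℂ) - Matrix.diagonal (Complex.ofReal ∘ c) := by
      rw [Matrix.smul_one_eq_diagonal, Matrix.diagonal_sub]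
      rfl
    rw [this, hc]
    rw [Matrix.mul_sub, Matrix.sub_mul]
    congr 1
    rw [Matrix.mul_smul, mul_one, Matrix.smul_mul, hVV]
  have hVV' : star (V : Matrix n n ℂ) * (V : Matrix n n ℂ) = 1 :=
    Matrix.mem_unitaryGroup_iff'.mp V.2
  rw [h1, Matrix.det_mul, Matrix.det_mul, mul_comm, ← mul_assoc, ← Matrix.det_mul, hVV',
    Matrix.det_one, one_mul, Matrix.det_diagonal]

open Polynomial in
/-- eigenvalue multiset for a unitary diagonalization -/
lemma aux_multiset {n : Type*} [Fintype n] [DecidableEq n] {A : Matrix n n ℂ}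
    (hA : A.IsHermitian) (V : Matrix.unitaryGroup n ℂ) (c : n → ℝ)
    (hc : A = (V : Matrix n n ℂ) * Matrix.diagonal (Complex.ofReal ∘ c) * star (V : Matrix n n ℂ)) :
    (Finset.univ.val.map c) = (Finset.univ.val.map hA.eigenvalues) := by
  have h1 := aux_det A V c hc
  have h2 := aux_det A hA.eigenvectorUnitary hA.eigenvalues hA.spectral_theorem
  have hpoly : ((Finset.univ.val.map fun i => ((c i : ℂ))).map (fun a => X - C a)).prod
      = ((Finset.univ.val.map fun i => ((hA.eigenvalues i : ℂ))).map (fun a => X - C a)).prod := by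
    apply Polynomial.funext
    intro x
    simp only [Polynomial.eval_multiset_prod, Multiset.map_map, Function.comp_def,
      Polynomial.eval_sub, Polynomial.eval_X, Polynomial.eval_C]
    rw [Finset.prod_map_val, Finset.prod_map_val, ← h1 x, ← h2 x]
  have := congrArg Polynomial.roots hpoly
  rw [Polynomial.roots_multiset_prod_X_sub_C, Polynomial.roots_multiset_prod_X_sub_C] at this
  have : Multiset.map Complex.ofReal (Finset.univ.val.map c)
      = Multiset.map Complex.ofReal (Finset.univ.val.map hA.eigenvalues) := by
    rw [Multiset.map_map, Multiset.map_map]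
    exact this
  exact Multiset.map_injective Complex.ofReal_injective this

/-- transfer sums over eigenvalues -/
lemma aux_sum_eig {n : Type*} [Fintype n] [DecidableEq n] {A : Matrix n n ℂ}
    (hA : A.IsHermitian) (V : Matrix.unitaryGroup n ℂ) (c : n → ℝ)
    (hc : A = (V : Matrix n n ℂ) * Matrix.diagonal (Complex.ofReal ∘ c) * star (V : Matrix n n ℂ))
    (g : ℝ → ℝ) : ∑ i, g (hA.eigenvalues i) = ∑ i, g (c i) := by
  have h := aux_multiset hA V c hc
  have e1 : ∀ (f : n → ℝ), ((Finset.univ.val.map f).map g).sum = ∑ i, g (f i) := by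
    intro f
    rw [Multiset.map_map]
    exact Finset.sum_map_val _ _
  rw [← e1, ← e1, h]

lemma aux_trace {n : Type*} [Fintype n] [DecidableEq n] (W : Matrix n n ℂ) (a b : n → ℝ) :
    (Matrix.diagonal (Complex.ofReal ∘ a) * W * Matrix.diagonal (Complex.ofReal ∘ b)
      * star W).trace
      = ((∑ i, ∑ j, a i * b j * Complex.normSq (W i j) : ℝ) : ℂ) := by
  have h1 : ∀ i j, (Matrix.diagonal (Complex.ofReal ∘ a) * W
      * Matrix.diagonal (Complex.ofReal ∘ b)) i j = (a i : ℂ) * W i j * (b j : ℂ) := by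
    intro i j
    rw [Matrix.mul_diagonal, Matrix.diagonal_mul]
    rfl
  rw [Matrix.trace]
  push_cast
  simp only [Matrix.diag_apply, Matrix.mul_apply, h1, Matrix.star_apply]
  congr 1
  ext i
  congr 1
  ext j
  have : (a i : ℂ) * W i j * (b j : ℂ) * star (W i j)
      = (a i : ℂ) * (b j : ℂ) * (W i j * (starRingEnd ℂ) (W i j)) := by
    rw [show star (W i j) = (starRingEnd ℂ) (W i j) from rfl]
    ring
  rw [this, Complex.mul_conj]
  all_goals push_cast
  all_goals ring

lemma aux_row {n : Type*} [Fintype n] [DecidableEq n] {W : Matrix n n ℂ}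
    (h : W * star W = 1) (i : n) : ∑ j, Complex.normSq (W i j) = 1 := by
  have h2 : (W * star W) i i = 1 := by rw [h, Matrix.one_apply_eq]
  rw [Matrix.mul_apply] at h2
  have h3 : ∑ j, W i j * star (W i j) = ((∑ j, Complex.normSq (W i j) : ℝ) : ℂ) := by
    push_cast
    congr 1
    ext j
    rw [show star (W i j) = (starRingEnd ℂ) (W i j) from rfl, Complex.mul_conj]
    all_goals push_cast
    all_goals ring
  simp only [Matrix.star_apply] at h2
  rw [h3] at h2
  exact_mod_cast h2

lemma aux_col {n : Type*} [Fintype n] [DecidableEq n] {W : Matrix n n ℂ}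
    (h : star W * W = 1) (j : n) : ∑ i, Complex.normSq (W i j) = 1 := by
  have h2 : (star W * W) j j = 1 := by rw [h, Matrix.one_apply_eq]
  rw [Matrix.mul_apply] at h2
  simp only [Matrix.star_apply] at h2
  have h3 : ∑ i, star (W i j) * W i j = ((∑ i, Complex.normSq (W i j) : ℝ) : ℂ) := by
    push_cast
    congr 1
    ext i
    rw [show star (W i j) = (starRingEnd ℂ) (W i j) from rfl, mul_comm, Complex.mul_conj]
    all_goals push_cast
    all_goals ring
  rw [h3] at h2
  exact_mod_cast h2

lemma aux_trace_conj {n : Type*} [Fintype n] [DecidableEq n] {U M : Matrix n n ℂ}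
    (h : star U * U = 1) : (U * M * star U).trace = M.trace := by
  rw [Matrix.trace_mul_cycle, h, Matrix.one_mul]

/-- For Hermitian `H` and `β > 0`,
`log tr(e^{−βH}) = −β · min_ρ (tr(Hρ) − β⁻¹ S(ρ))` over density matrices `ρ`, and the
minimum is attained by the Gibbs state `ρ_β = e^{−βH} / tr(e^{−βH})`. -/
theorem log_partition_eq_neg_beta_min_free_energy {N : ℕ} (hN : 0 < N)
    (β : ℝ) (hβ : 0 < β)
    (H : Matrix (Fin N) (Fin N) ℂ) (hH : H.IsHermitian)
    (Z : ℂ) (hZ : Z = (exp (-(β : ℂ) • H)).trace)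
    (ρβ : Matrix (Fin N) (Fin N) ℂ) (hρβ : ρβ = Z⁻¹ • exp (-(β : ℂ) • H)) :
    Real.log Z.re
        = -β * sInf {x : ℝ | ∃ ρ : Matrix (Fin N) (Fin N) ℂ, ∃ h : ρ.PosSemidef,
            ρ.trace = 1 ∧
            x = ((H * ρ).trace).re
                + β⁻¹ * ∑ i, h.1.eigenvalues i * Real.log (h.1.eigenvalues i)}
      ∧ ∃ hg : ρβ.PosSemidef, ρβ.trace = 1 ∧
          ((H * ρβ).trace).re
              + β⁻¹ * ∑ i, hg.1.eigenvalues i * Real.log (hg.1.eigenvalues i)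
            = sInf {x : ℝ | ∃ ρ : Matrix (Fin N) (Fin N) ℂ, ∃ h : ρ.PosSemidef,
                ρ.trace = 1 ∧
                x = ((H * ρ).trace).re
                    + β⁻¹ * ∑ i, h.1.eigenvalues i * Real.log (h.1.eigenvalues i)} := by
  haveI : Nonempty (Fin N) := ⟨⟨0, hN⟩⟩
  set U : Matrix (Fin N) (Fin N) ℂ := (hH.eigenvectorUnitary : Matrix (Fin N) (Fin N) ℂ) with hU
  set ε : Fin N → ℝ := hH.eigenvalues with hε
  have hUU : U * star U = 1 := Matrix.mem_unitaryGroup_iff.mp hH.eigenvectorUnitary.2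
  have hU'U : star U * U = 1 := Matrix.mem_unitaryGroup_iff'.mp hH.eigenvectorUnitary.2
  have hUunit : IsUnit U := ⟨⟨U, star U, hUU, hU'U⟩, rfl⟩
  have hUinv : U⁻¹ = star U := Matrix.inv_eq_left_inv hU'U
  have hspec : H = U * Matrix.diagonal (Complex.ofReal ∘ ε) * star U := hH.spectral_theorem
  have hexp : exp (-(β : ℂ) • H)
      = U * Matrix.diagonal (fun i => (Real.exp (-(β * ε i)) : ℂ)) * star U := by
    have h0 : -(β : ℂ) • H = U * Matrix.diagonal (fun i => -(β : ℂ) * (ε i : ℂ)) * star U := by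
      rw [hspec, ← Matrix.smul_mul, ← Matrix.mul_smul, ← Matrix.diagonal_smul]
      all_goals (congr 2 <;> (try funext i) <;> simp [Function.comp])
    have hfun : exp (fun i => -(β : ℂ) * (ε i : ℂ))
        = fun i => (Real.exp (-(β * ε i)) : ℂ) := by
      rw [Pi.exp_def]
      funext i
      rw [← Complex.exp_eq_exp_ℂ,
        show -(β : ℂ) * (ε i : ℂ) = ((-(β * ε i) : ℝ) : ℂ) by push_cast; ring]
      exact (Complex.ofReal_exp _).symm
    rw [h0, ← hUinv, Matrix.exp_conj U _ hUunit, Matrix.exp_diagonal, hfun, hUinv]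
  set R : ℝ := ∑ i, Real.exp (-(β * ε i)) with hRdef
  have hR : 0 < R := Finset.sum_pos (fun i _ => Real.exp_pos _) Finset.univ_nonempty
  have hZR : Z = (R : ℂ) := by
    rw [hZ, hexp, aux_trace_conj hU'U, Matrix.trace_diagonal, hRdef]
    norm_cast
  set q : Fin N → ℝ := fun i => Real.exp (-(β * ε i)) / R with hqdef
  have hq : ∀ i, 0 < q i := fun i => div_pos (Real.exp_pos _) hR
  have hq1 : ∑ i, q i = 1 := by
    rw [hqdef, ← Finset.sum_div, ← hRdef, div_self hR.ne']
  have hq' : ((R : ℂ))⁻¹ • (fun i : Fin N => (Real.exp (-(β * ε i)) : ℂ))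
      = Complex.ofReal ∘ q := by
    funext i
    simp only [Pi.smul_apply, smul_eq_mul, Function.comp_apply, hqdef]
    rw [Complex.ofReal_div, div_eq_inv_mul]
  have hgibbs : ρβ = U * Matrix.diagonal (Complex.ofReal ∘ q) * star U := by
    rw [hρβ, hexp, hZR, ← Matrix.smul_mul, ← Matrix.mul_smul, ← Matrix.diagonal_smul, hq']
  have hDq : (Matrix.diagonal (Complex.ofReal ∘ q)).PosSemidef :=
    Matrix.posSemidef_diagonal_iff.mpr fun i => by
      simpa using Complex.zero_le_real.mpr (hq i).le
  have hρβPSD : ρβ.PosSemidef := by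
    rw [hgibbs, Matrix.star_eq_conjTranspose]
    exact hDq.mul_mul_conjTranspose_same U
  have htrρβ : ρβ.trace = 1 := by
    rw [hgibbs, aux_trace_conj hU'U, Matrix.trace_diagonal]
    simp only [Function.comp_apply]
    exact_mod_cast hq1
  have htrHρβ : (H * ρβ).trace = ((∑ i, ε i * q i : ℝ) : ℂ) := by
    have e1 : H * ρβ = U * (Matrix.diagonal (Complex.ofReal ∘ ε)
        * Matrix.diagonal (Complex.ofReal ∘ q)) * star U := by
      rw [hspec, hgibbs]
      simp only [Matrix.mul_assoc]
      rw [show star U * (U * (Matrix.diagonal (Complex.ofReal ∘ q) * star U))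
          = Matrix.diagonal (Complex.ofReal ∘ q) * star U by
        rw [← Matrix.mul_assoc, hU'U, Matrix.one_mul]]
    rw [e1, aux_trace_conj hU'U, Matrix.diagonal_mul_diagonal, Matrix.trace_diagonal]
    push_cast
    rfl
  have hlogq : ∀ i, Real.log (q i) = -(β * ε i) - Real.log R := by
    intro i
    rw [hqdef]
    rw [Real.log_div (Real.exp_ne_zero _) hR.ne', Real.log_exp]
  have hsumqlog : ∑ i, q i * Real.log (q i)
      = -β * (∑ i, ε i * q i) - Real.log R := by
    calc ∑ i, q i * Real.log (q i)
        = ∑ i, (-β * (ε i * q i) - Real.log R * q i) := by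
          apply Finset.sum_congr rfl
          intro i _
          rw [hlogq i]
          ring
      _ = -β * (∑ i, ε i * q i) - Real.log R := by
          rw [Finset.sum_sub_distrib, ← Finset.mul_sum, ← Finset.mul_sum, hq1, mul_one]
  have hFρβ : (∑ i, ε i * q i) + β⁻¹ * ∑ i, q i * Real.log (q i)
      = -(β⁻¹ * Real.log R) := by
    rw [hsumqlog]
    field_simp
    all_goals ring
  have key : ∀ (ρ : Matrix (Fin N) (Fin N) ℂ) (h : ρ.PosSemidef), ρ.trace = 1 →
      -(β⁻¹ * Real.log R) ≤ ((H * ρ).trace).re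
        + β⁻¹ * ∑ i, h.1.eigenvalues i * Real.log (h.1.eigenvalues i) := by
    intro ρ h htr
    set V : Matrix (Fin N) (Fin N) ℂ := ↑h.1.eigenvectorUnitary with hV
    set l : Fin N → ℝ := h.1.eigenvalues with hl
    have hVV : V * star V = 1 := Matrix.mem_unitaryGroup_iff.mp h.1.eigenvectorUnitary.2
    have hV'V : star V * V = 1 := Matrix.mem_unitaryGroup_iff'.mp h.1.eigenvectorUnitary.2
    have hspecρ : ρ = V * Matrix.diagonal (Complex.ofReal ∘ l) * star V := h.1.spectral_theorem
    have hlnn : ∀ i, 0 ≤ l i := h.eigenvalues_nonneg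
    have hl1 : ∑ i, l i = 1 := by
      have h2 : ρ.trace = ((∑ i, l i : ℝ) : ℂ) := by
        rw [hspecρ, aux_trace_conj hV'V, Matrix.trace_diagonal]
        simp only [Function.comp_apply]
        norm_cast
      rw [htr] at h2
      exact_mod_cast h2.symm
    set W : Matrix (Fin N) (Fin N) ℂ := star U * V with hW
    have hWrow : W * star W = 1 := by
      rw [hW, star_mul, star_star, Matrix.mul_assoc, ← Matrix.mul_assoc V, hVV,
        Matrix.one_mul, hU'U]
    have hWcol : star W * W = 1 := by
      rw [hW, star_mul, star_star, Matrix.mul_assoc, ← Matrix.mul_assoc U, hUU,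
        Matrix.one_mul, hV'V]
    set P : Fin N → Fin N → ℝ := fun i j => Complex.normSq (W i j) with hP
    have htrHρ : (H * ρ).trace = ((∑ i, ∑ j, ε i * l j * P i j : ℝ) : ℂ) := by
      have e1 : H * ρ = U * (Matrix.diagonal (Complex.ofReal ∘ ε) * W
          * Matrix.diagonal (Complex.ofReal ∘ l) * star W) * star U := by
        rw [hspec, hspecρ, hW, star_mul, star_star]
        simp only [Matrix.mul_assoc]
        rw [hUU]
        simp only [Matrix.mul_one]
      rw [e1, aux_trace_conj hU'U, aux_trace W ε l]
    have hKlein := aux_klein P l q (fun i j => Complex.normSq_nonneg _)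
      (fun i => aux_row hWrow i) (fun j => aux_col hWcol j) hlnn hl1 hq hq1
    have hre : ((H * ρ).trace).re = ∑ i, ∑ j, ε i * l j * P i j := by
      rw [htrHρ, Complex.ofReal_re]
    have hLHS : ∑ j, l j * (∑ i, P i j * Real.log (q i))
        = -β * (∑ i, ∑ j, ε i * l j * P i j) - Real.log R := by
      calc ∑ j, l j * (∑ i, P i j * Real.log (q i))
          = ∑ j, ∑ i, (-β * (ε i * l j * P i j) - Real.log R * (l j * P i j)) := by
            apply Finset.sum_congr rfl
            intro j _
            rw [Finset.mul_sum]
            apply Finset.sum_congr rfl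
            intro i _
            rw [hlogq i]
            ring
        _ = -β * (∑ j, ∑ i, ε i * l j * P i j)
            - Real.log R * (∑ j, l j * ∑ i, P i j) := by
            rw [Finset.mul_sum, Finset.mul_sum, ← Finset.sum_sub_distrib]
            all_goals refine Finset.sum_congr rfl fun j _ => ?_
            all_goals rw [Finset.mul_sum, Finset.mul_sum, Finset.mul_sum,
              ← Finset.sum_sub_distrib]
            all_goals refine Finset.sum_congr rfl fun i _ => ?_
            all_goals ring
        _ = -β * (∑ i, ∑ j, ε i * l j * P i j) - Real.log R := by
            rw [Finset.sum_comm]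
            have h3 : ∑ j, l j * ∑ i, P i j = 1 := by
              have h4 : ∀ j, (∑ i, P i j) = 1 := fun j => aux_col hWcol j
              simp only [h4, mul_one]
              exact hl1
            rw [h3, mul_one]
    rw [hLHS] at hKlein
    have hβinv : 0 < β⁻¹ := inv_pos.mpr hβ
    rw [hre]
    have h5 := mul_le_mul_of_nonneg_left hKlein hβinv.le
    have hexp2 : β⁻¹ * (-β * (∑ i, ∑ j, ε i * l j * P i j) - Real.log R)
        = -(∑ i, ∑ j, ε i * l j * P i j) - β⁻¹ * Real.log R := by
      field_simp
      all_goals ring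
    rw [hexp2] at h5
    linarith
  have hsumg : ∑ i, hρβPSD.1.eigenvalues i * Real.log (hρβPSD.1.eigenvalues i)
      = ∑ i, q i * Real.log (q i) :=
    aux_sum_eig hρβPSD.1 hH.eigenvectorUnitary q hgibbs (fun t => t * Real.log t)
  have hρβval : ((H * ρβ).trace).re
      + β⁻¹ * ∑ i, hρβPSD.1.eigenvalues i * Real.log (hρβPSD.1.eigenvalues i)
      = -(β⁻¹ * Real.log R) := by
    rw [htrHρβ, Complex.ofReal_re, hsumg, hFρβ]
  set S : Set ℝ := {x : ℝ | ∃ ρ : Matrix (Fin N) (Fin N) ℂ, ∃ h : ρ.PosSemidef,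
      ρ.trace = 1 ∧
      x = ((H * ρ).trace).re
          + β⁻¹ * ∑ i, h.1.eigenvalues i * Real.log (h.1.eigenvalues i)} with hS
  have hmem : -(β⁻¹ * Real.log R) ∈ S := ⟨ρβ, hρβPSD, htrρβ, hρβval.symm⟩
  have hlbS : ∀ x ∈ S, -(β⁻¹ * Real.log R) ≤ x := by
    rintro x ⟨ρ, h, htr, rfl⟩
    exact key ρ h htr
  have hInf : sInf S = -(β⁻¹ * Real.log R) := IsLeast.csInf_eq ⟨hmem, hlbS⟩
  refine ⟨?_, hρβPSD, htrρβ, by rw [hInf, hρβval]⟩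
  rw [hInf, hZR, Complex.ofReal_re]
  field_simp
end

section
/- For any Hermitian matrix H on ℂ^N and any orthonormal basis {|ψ_j⟩}, the vector of eigenvalues of H majorizes the vector of diagonal elements (⟨ψ_j|H|ψ_j⟩)_j (Schur–Horn inequality direction). -/
open Finset

private lemma filter_lt_eq_Iio {N k : ℕ} (hk : k < N) :
    Finset.univ.filter (fun j : Fin N => (j : ℕ) < k) = Finset.Iio (⟨k, hk⟩ : Fin N) := by
  ext j; simp [Fin.lt_def]

private lemma card_filter_lt {N k : ℕ} (hk : k < N) :
    (Finset.univ.filter (fun j : Fin N => (j : ℕ) < k)).card = k := by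
  rw [filter_lt_eq_Iio hk, Fin.card_Iio]

private lemma key_bound {N : ℕ} (lam : Fin N → ℝ) (σ : Equiv.Perm (Fin N))
    (hσ : Antitone (lam ∘ σ)) (c : Fin N → ℝ)
    (h0 : ∀ a, 0 ≤ c a) (h1 : ∀ a, c a ≤ 1) (k : Fin N)
    (hsum : ∑ a, c a = (k : ℕ)) :
    ∑ a, c a * lam a ≤
      ∑ j ∈ Finset.univ.filter (fun j : Fin N => (j : ℕ) < (k : ℕ)), lam (σ j) := by
  set F := Finset.univ.filter (fun j : Fin N => (j : ℕ) < (k : ℕ)) with hF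
  set T := F.image σ with hT
  have hcardT : T.card = (k : ℕ) := by
    rw [hT, Finset.card_image_of_injective _ σ.injective, hF, card_filter_lt k.isLt]
  set χ : Fin N → ℝ := fun a => if a ∈ T then 1 else 0 with hχ
  have hrhs : ∑ j ∈ F, lam (σ j) = ∑ a, χ a * lam a := by
    have h1' : ∑ j ∈ F, lam (σ j) = ∑ a ∈ T, lam a :=
      (Finset.sum_image (fun x _ y _ h => σ.injective h)).symm
    rw [h1']; simp [hχ, ite_mul, Finset.sum_ite_mem]
  have hχsum : ∑ a, χ a = (k : ℕ) := by
    simp [hχ, Finset.sum_ite_mem, hcardT]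
  set μ := lam (σ k) with hμ
  have hterm : ∀ a ∈ Finset.univ, (c a - χ a) * (lam a - μ) ≤ 0 := by
    intro a _
    by_cases ha : a ∈ T
    · obtain ⟨j, hjF, hja⟩ := Finset.mem_image.mp ha
      have hjk : j ≤ k := by
        rw [Fin.le_def]
        exact le_of_lt (by simpa [hF] using hjF)
      have hlam : μ ≤ lam a := by
        rw [← hja]; exact hσ hjk
      have : χ a = 1 := by simp [hχ, ha]
      rw [this]
      exact mul_nonpos_of_nonpos_of_nonneg (by linarith [h1 a]) (by linarith)
    · have hj : ¬ ((σ.symm a : ℕ) < (k : ℕ)) := by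
        intro hlt
        exact ha (Finset.mem_image.mpr ⟨σ.symm a, by simpa [hF] using hlt, by simp⟩)
      have hjk : k ≤ σ.symm a := by rw [Fin.le_def]; omega
      have hlam : lam a ≤ μ := by
        have := hσ hjk
        simpa using this
      have : χ a = 0 := by simp [hχ, ha]
      rw [this]
      exact mul_nonpos_of_nonneg_of_nonpos (by linarith [h0 a]) (by linarith)
  have hsum0 : ∑ a, (c a - χ a) * (lam a - μ) ≤ 0 := Finset.sum_nonpos hterm
  have expand : ∑ a, (c a - χ a) * (lam a - μ)
      = (∑ a, c a * lam a) - (∑ a, χ a * lam a)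
        - μ * (∑ a, c a) + μ * (∑ a, χ a) := by
    rw [Finset.mul_sum, Finset.mul_sum, ← Finset.sum_sub_distrib, ← Finset.sum_sub_distrib,
      ← Finset.sum_add_distrib]
    exact Finset.sum_congr rfl (fun a _ => by ring)
  rw [hrhs]
  rw [expand, hsum, hχsum] at hsum0
  linarith

/-- For a Hermitian matrix `H` and any orthonormal basis (given by a unitary
`U`, so the diagonal entries in that basis are `(U† H U)_{jj}`), the vector of eigenvalues
of `H` majorizes the vector of diagonal elements: after sorting both in decreasing order
(via permutations `σ`, `τ`), all partial sums of the eigenvalues dominate those of the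
diagonal, with equal total sums. -/
theorem eigenvalues_majorize_diagonal {N : ℕ}
    (H : Matrix (Fin N) (Fin N) ℂ) (hH : H.IsHermitian)
    (U : Matrix.unitaryGroup (Fin N) ℂ)
    (dvec : Fin N → ℝ)
    (hdvec : ∀ j, dvec j = ((star (U : Matrix (Fin N) (Fin N) ℂ) * H *
        (U : Matrix (Fin N) (Fin N) ℂ)) j j).re) :
    ∃ σ τ : Equiv.Perm (Fin N),
      Antitone (hH.eigenvalues ∘ σ) ∧ Antitone (dvec ∘ τ) ∧
      (∀ k : ℕ, ∑ j ∈ Finset.univ.filter (fun j : Fin N => (j : ℕ) < k), dvec (τ j)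
          ≤ ∑ j ∈ Finset.univ.filter (fun j : Fin N => (j : ℕ) < k), hH.eigenvalues (σ j)) ∧
      ∑ j, hH.eigenvalues j = ∑ j, dvec j := by
  classical
  set lam := hH.eigenvalues with hlam
  -- the unitary connecting eigenbasis to the given basis
  set Wu : Matrix.unitaryGroup (Fin N) ℂ := star (hH.eigenvectorUnitary) * U with hWu
  set W : Matrix (Fin N) (Fin N) ℂ := (Wu : Matrix (Fin N) (Fin N) ℂ) with hWdef
  set S : Fin N → Fin N → ℝ := fun a j => Complex.normSq (W a j) with hS
  have hS0 : ∀ a j, 0 ≤ S a j := fun a j => Complex.normSq_nonneg _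
  -- diagonal entries as convex combinations of eigenvalues
  have hd : ∀ j, dvec j = ∑ a, lam a * S a j := by
    intro j
    have hconj : star (U : Matrix (Fin N) (Fin N) ℂ) * H * (U : Matrix (Fin N) (Fin N) ℂ)
        = star W * Matrix.diagonal (Complex.ofReal ∘ lam) * W := by
      conv_lhs => rw [hH.spectral_theorem, Unitary.conjStarAlgAut_apply]
      have : W = star (hH.eigenvectorUnitary : Matrix (Fin N) (Fin N) ℂ) *
          (U : Matrix (Fin N) (Fin N) ℂ) := rfl
      rw [this, Matrix.star_mul, star_star]
      noncomm_ring
    rw [hdvec, hconj]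
    have : (star W * Matrix.diagonal (Complex.ofReal ∘ lam) * W) j j
        = ∑ a, (lam a : ℂ) * (Complex.normSq (W a j) : ℂ) := by
      rw [Matrix.mul_apply]
      congr 1; ext a
      rw [Matrix.mul_apply]
      rw [Finset.sum_eq_single a]
      · simp only [Matrix.diagonal_apply, Matrix.star_apply, if_pos rfl, if_true,
          Function.comp_apply, Complex.star_def]
        rw [Complex.normSq_eq_conj_mul_self]
        ring
      · intro b _ hb
        simp [Matrix.diagonal_apply, Matrix.star_apply, hb]
      · simp
    rw [this]
    simp
    rfl
  -- row sums of S are 1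
  have hrow : ∀ a, ∑ j, S a j = 1 := by
    intro a
    have h1 : W * star W = 1 := Matrix.mem_unitaryGroup_iff.mp Wu.2
    have := congrFun (congrFun h1 a) a
    rw [Matrix.mul_apply, Matrix.one_apply_eq] at this
    have h2 : ∑ j, (Complex.normSq (W a j) : ℂ) = 1 := by
      rw [← this]
      refine Finset.sum_congr rfl fun j _ => ?_
      rw [Matrix.star_apply, Complex.star_def, Complex.mul_conj]
    have := congrArg Complex.re h2
    simpa using this
  -- column sums of S are 1
  have hcol : ∀ j, ∑ a, S a j = 1 := by
    intro j
    have h1 : star W * W = 1 := Matrix.mem_unitaryGroup_iff'.mp Wu.2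
    have := congrFun (congrFun h1 j) j
    rw [Matrix.mul_apply, Matrix.one_apply_eq] at this
    have h2 : ∑ a, (Complex.normSq (W a j) : ℂ) = 1 := by
      rw [← this]
      refine Finset.sum_congr rfl fun a _ => ?_
      rw [Matrix.star_apply, Complex.star_def, Complex.normSq_eq_conj_mul_self]
    have := congrArg Complex.re h2
    simpa using this
  -- sorting permutations
  set σ : Equiv.Perm (Fin N) := Tuple.sort (fun i => -lam i) with hσdef
  set τ : Equiv.Perm (Fin N) := Tuple.sort (fun i => -dvec i) with hτdef
  have hσa : Antitone (lam ∘ σ) := by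
    intro a b hab
    have := Tuple.monotone_sort (fun i => -lam i) hab
    simpa using this
  have hτa : Antitone (dvec ∘ τ) := by
    intro a b hab
    have := Tuple.monotone_sort (fun i => -dvec i) hab
    simpa using this
  -- equal total sums
  have htot : ∑ j, lam j = ∑ j, dvec j := by
    calc ∑ a, lam a = ∑ a, lam a * ∑ j, S a j := by
          simp [hrow]
      _ = ∑ j, ∑ a, lam a * S a j := by
          simp_rw [Finset.mul_sum]; rw [Finset.sum_comm]
      _ = ∑ j, dvec j := by simp_rw [← hd]
  refine ⟨σ, τ, hσa, hτa, fun k => ?_, htot⟩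
  by_cases hk : k < N
  · -- use the key bound with c a = ∑_{j ∈ F} S a (τ j)
    set F := Finset.univ.filter (fun j : Fin N => (j : ℕ) < k) with hFd
    set c : Fin N → ℝ := fun a => ∑ j ∈ F, S a (τ j) with hc
    have h0 : ∀ a, 0 ≤ c a := fun a => Finset.sum_nonneg (fun j _ => hS0 a _)
    have h1 : ∀ a, c a ≤ 1 := by
      intro a
      calc c a ≤ ∑ j, S a (τ j) :=
            Finset.sum_le_sum_of_subset_of_nonneg (Finset.subset_univ F)
              (fun j _ _ => hS0 a _)
        _ = ∑ j, S a j := Equiv.sum_comp τ (fun j => S a j)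
        _ = 1 := hrow a
    have hsum : ∑ a, c a = ((⟨k, hk⟩ : Fin N) : ℕ) := by
      show ∑ a, ∑ j ∈ F, S a (τ j) = (k : ℝ)
      rw [Finset.sum_comm]
      have : ∀ j ∈ F, ∑ a, S a (τ j) = 1 := fun j _ => hcol (τ j)
      rw [Finset.sum_congr rfl this]
      simp [hFd, card_filter_lt hk]
    have hlhs : ∑ j ∈ F, dvec (τ j) = ∑ a, c a * lam a := by
      calc ∑ j ∈ F, dvec (τ j) = ∑ j ∈ F, ∑ a, lam a * S a (τ j) :=
            Finset.sum_congr rfl fun j _ => hd (τ j)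
        _ = ∑ a, ∑ j ∈ F, lam a * S a (τ j) := Finset.sum_comm
        _ = ∑ a, c a * lam a := by
            refine Finset.sum_congr rfl fun a _ => ?_
            simp only [hc, Finset.sum_mul]
            exact Finset.sum_congr rfl fun j _ => mul_comm _ _
    have := key_bound lam σ hσa c h0 h1 ⟨k, hk⟩ hsum
    rw [hlhs]
    exact this
  · -- k ≥ N : both filters are everything; use equality of totals
    push_neg at hk
    have hfull : Finset.univ.filter (fun j : Fin N => (j : ℕ) < k) = Finset.univ := by
      ext j; simp; omega
    rw [hfull]
    rw [Equiv.sum_comp τ dvec, Equiv.sum_comp σ lam]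
    exact le_of_eq htot.symm
end
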